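/- A nonempty partition λ of n satisfies 2/n · Σ_{b∈λ} ct(b) = ct(b_2), where b_2 is the removable box of largest content (the box at the end of the first row of the largest initial rectangle), if and only if λ is a rectangle. -/

import Mathlib

/-- A partition given as a weakly decreasing list of positive integers. -/
def IsPartition (l : List ℕ) : Prop :=
  l.Pairwise (· ≥ ·) ∧ ∀ x ∈ l, 0 < x

/-- Sum of contents `y - x` over the boxes of the Young diagram of `l`
(boxes in row `x+1` are `(x+1, y+1)` for `y < l[x]`, content `y - x`). -/
def contentSum (l : List ℕ) : ℤ :=
  ∑ x ∈ Finset.range l.length, ∑ y ∈ Finset.range (l.getD x 0), ((y : ℤ) - (x : ℤ))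

private lemma sum_getD (l : List ℕ) : l.sum = ∑ x ∈ Finset.range l.length, l.getD x 0 := by
  induction l with
  | nil => simp
  | cons a t ih => simp [Finset.sum_range_succ', ih, List.getD, Nat.add_comm]

private lemma contentInnerSum (x a : ℕ) :
    (2:ℤ) * ∑ y ∈ Finset.range a, ((y:ℤ) - x) = a * ((a:ℤ) - 1 - 2*x) := by
  induction a with
  | zero => simp
  | succ a ih => rw [Finset.sum_range_succ, mul_add, ih]; push_cast; ring

private lemma gauss (r : ℕ) : (2:ℤ) * ∑ x ∈ Finset.range r, (x:ℤ) = r * ((r:ℤ) - 1) := by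
  induction r with
  | zero => simp
  | succ a ih => rw [Finset.sum_range_succ, mul_add, ih]; push_cast; ring

/-- 2/n Σ ct(b) = ct(b₂) = q - r (with q the first part, r the number of parts equal to q,
so b₂ is the removable box of largest content) iff λ is a rectangle. -/
theorem stmt4 (l : List ℕ) (h : IsPartition l) (hne : l ≠ []) (n : ℕ) (hn : l.sum = n) :
    2 / (n : ℚ) * (contentSum l : ℚ) =
        ((l.head hne : ℚ) - (l.count (l.head hne) : ℚ)) ↔
      ∀ x ∈ l, x = l.head hne := by
  obtain ⟨hs, hpos⟩ := h
  set q := l.head hne with hq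
  set k := l.length with hk
  set r := l.count q with hr
  -- elements are at most q
  have hle : ∀ x ∈ l, x ≤ q := by
    intro x hx
    rw [← List.cons_head_tail (l := l) hne] at hs hx
    rcases List.mem_cons.mp hx with h | h
    · omega
    · exact (List.pairwise_cons.mp hs).1 x h
  -- decomposition
  set T := l.takeWhile (· == q) with hT
  set D := l.dropWhile (· == q) with hD
  have hTD : T ++ D = l := List.takeWhile_append_dropWhile
  have hTq : ∀ x ∈ T, x = q := fun x hx => by simpa using List.mem_takeWhile_imp hx
  have hDlt : ∀ x ∈ D, x < q := by
    intro x hx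
    have hsub := List.dropWhile_sublist (l := l) (· == q)
    have hsD : D.Pairwise (· ≥ ·) := hs.sublist hsub
    cases hDc : D with
    | nil => rw [hDc] at hx; simp at hx
    | cons a d =>
      rw [hDc] at hx hsD
      have ha : (a == q) = false := by
        have := List.head_dropWhile_not (· == q) (l := l) (by rw [← hD, hDc]; simp)
        simpa [← hD, hDc] using this
      have haq : a ≠ q := by simpa using ha
      have halt : a < q := lt_of_le_of_ne (hle a (hsub.mem (by rw [← hD, hDc]; exact List.mem_cons_self (a := a) (l := d)))) haq
      rcases List.mem_cons.mp hx with h | h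
      · omega
      · exact lt_of_le_of_lt ((List.pairwise_cons.mp hsD).1 x h) halt
  have hrT : r = T.length := by
    rw [hr, ← hTD, List.count_append,
      List.count_eq_length.mpr (fun b hb => (hTq b hb).symm),
      List.count_eq_zero.mpr (fun hq' => lt_irrefl q (hDlt q hq'))]
    omega
  have hrk : r ≤ k := List.count_le_length
  -- values of parts
  have hgetq : ∀ x, x < r → l.getD x 0 = q := by
    intro x hx
    have hxT : x < T.length := hrT ▸ hx
    have hlen : x < (T ++ D).length := by rw [hTD]; exact lt_of_lt_of_le hx hrk
    have h1 : l.getD x 0 = T[x] := by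
      rw [← hTD, List.getD_eq_getElem _ 0 hlen]
      exact List.getElem_append_left hxT
    exact h1.trans (hTq _ (List.getElem_mem hxT))
  have hgetlt : ∀ x, r ≤ x → x < k → l.getD x 0 < q ∧ 0 < l.getD x 0 := by
    intro x hx1 hx2
    have hxT : T.length ≤ x := hrT ▸ hx1
    have hxD : x - T.length < D.length := by
      have : T.length + D.length = k := by rw [← List.length_append, hTD]
      omega
    have hlen : x < (T ++ D).length := by rw [hTD]; exact hx2
    have h1 : l.getD x 0 = D[x - T.length] := by
      rw [← hTD, List.getD_eq_getElem _ 0 hlen]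
      exact List.getElem_append_right hxT
    constructor
    · exact lt_of_eq_of_lt h1 (hDlt _ (List.getElem_mem hxD))
    · rw [List.getD_eq_getElem l 0 hx2]
      exact hpos _ (List.getElem_mem hx2)
  -- positivity of n
  have hn0 : 0 < n := by
    rcases List.exists_mem_of_ne_nil l hne with ⟨a, ha⟩
    have := hpos a ha
    have := List.single_le_sum (fun x _ => Nat.zero_le x) a ha
    omega
  -- reduce to integer equation
  have hQ : (2 / (n : ℚ) * (contentSum l : ℚ) = ((q : ℚ) - (r : ℚ)))
      ↔ 2 * contentSum l = (n : ℤ) * ((q:ℤ) - (r:ℤ)) := by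
    rw [div_mul_eq_mul_div, div_eq_iff (by exact_mod_cast hn0.ne' : (n:ℚ) ≠ 0)]
    constructor
    · intro h'; exact_mod_cast (by linear_combination h' : (2 * (contentSum l : ℚ)) = (n:ℚ) * ((q:ℚ) - r))
    · intro h'; have : (2 * (contentSum l : ℚ)) = (n:ℚ) * ((q:ℚ) - r) := by exact_mod_cast h'
      linear_combination this
  rw [hQ]
  -- rewrite 2*contentSum
  set F : ℕ → ℤ := fun x => (l.getD x 0 : ℤ) * ((l.getD x 0 : ℤ) - 1 - 2*x - (q:ℤ) + (r:ℤ))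
    with hF
  have key : 2 * contentSum l - (n : ℤ) * ((q:ℤ) - (r:ℤ)) = ∑ x ∈ Finset.range k, F x := by
    have h2cs : 2 * contentSum l
        = ∑ x ∈ Finset.range k, (l.getD x 0 : ℤ) * ((l.getD x 0 : ℤ) - 1 - 2*x) := by
      rw [contentSum, Finset.mul_sum]
      exact Finset.sum_congr rfl fun x _ => contentInnerSum x _
    have hnsum : (n : ℤ) = ∑ x ∈ Finset.range k, (l.getD x 0 : ℤ) := by
      rw [← hn, sum_getD]; push_cast; rfl
    rw [h2cs, hnsum, Finset.sum_mul, ← Finset.sum_sub_distrib]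
    exact Finset.sum_congr rfl fun x _ => by rw [hF]; ring
  -- first r terms vanish
  have hsplit : ∑ x ∈ Finset.range k, F x = ∑ x ∈ Finset.Ico r k, F x := by
    rw [Finset.range_eq_Ico, ← Finset.sum_Ico_consecutive F (Nat.zero_le r) hrk,
      ← Finset.range_eq_Ico]
    have h0 : ∑ x ∈ Finset.range r, F x = 0 := by
      have : ∀ x ∈ Finset.range r, F x = (q:ℤ) * ((r:ℤ) - 1) - (q:ℤ) * (2 * (x:ℤ)) := by
        intro x hx
        rw [hF]
        simp only [hgetq x (Finset.mem_range.mp hx)]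
        ring
      have h2 : ∑ x ∈ Finset.range r, (2*(x:ℤ)) = (r:ℤ) * ((r:ℤ)-1) := by
        rw [← Finset.mul_sum]; exact gauss r
      rw [Finset.sum_congr rfl this, Finset.sum_sub_distrib, Finset.sum_const,
        Finset.card_range, ← Finset.mul_sum, h2, nsmul_eq_mul]
      ring
    rw [h0, zero_add]
  have keyiff : (2 * contentSum l = (n:ℤ) * ((q:ℤ) - (r:ℤ)))
      ↔ (∑ x ∈ Finset.Ico r k, F x = 0) := by
    constructor <;> intro h' <;> linarith [key, hsplit]
  rw [keyiff]
  -- remaining terms are negative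
  have hneg : ∀ x ∈ Finset.Ico r k, F x < 0 := by
    intro x hx
    rw [Finset.mem_Ico] at hx
    obtain ⟨h1, h2⟩ := hgetlt x hx.1 hx.2
    have hc1 : ((l.getD x 0 : ℕ) : ℤ) < (q:ℤ) := by exact_mod_cast h1
    have hc2 : (0:ℤ) < ((l.getD x 0 : ℕ) : ℤ) := by exact_mod_cast h2
    have hc3 : (r:ℤ) ≤ (x:ℤ) := by exact_mod_cast hx.1
    rw [hF]
    have : ((l.getD x 0 : ℕ) : ℤ) - 1 - 2*(x:ℤ) - (q:ℤ) + (r:ℤ) < 0 := by linarith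
    exact mul_neg_of_pos_of_neg hc2 this
  constructor
  · intro heq
    have hrk' : r = k := by
      by_contra hne'
      have hlt : r < k := lt_of_le_of_ne hrk hne'
      have : ∑ x ∈ Finset.Ico r k, F x < 0 :=
        Finset.sum_neg hneg ⟨r, Finset.mem_Ico.mpr ⟨le_refl r, hlt⟩⟩
      omega
    intro b hb
    exact ((List.count_eq_length.mp (hrk' : l.count q = l.length)) b hb).symm
  · intro hall
    have : r = k := List.count_eq_length.mpr (fun b hb => (hall b hb).symm)
    rw [this]
    simp
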